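/- With the value iteration defined as in the risk-sensitive remote-estimation MDP (V₀ = 1, V_{t+1} = min over u ∈ {0,1} of Q_{t+1}(·,·;u)), and the folded value iteration defined on ℝ≥0 × {0,1} by Ṽ₀ = 1, Q̃_{t+1}(Δ,c;0) = e^{γΔ²} Σ_{c₊} p_{c c₊} ∫_{[0,∞)} [e^{-(Δ₊-aΔ)²/(2σ²)} + e^{-(Δ₊+aΔ)²/(2σ²)}] Ṽ_t(Δ₊,c₊) dΔ₊, Q̃_{t+1}(Δ,c;1) = (1-c) e^{γ(λ+Δ²)} Σ_{c₊} p_{c c₊} ∫_{[0,∞)} [e^{-(Δ₊-aΔ)²/(2σ²)} + e^{-(Δ₊+aΔ)²/(2σ²)}] Ṽ_t(Δ₊,c₊) dΔ₊ + 2c e^{γλ} Σ_{c₊} p_{c c₊} ∫_{[0,∞)} e^{-Δ₊²/(2σ²)} Ṽ_t(Δ₊,c₊) dΔ₊, and Ṽ_{t+1} = min over u of Q̃_{t+1}: then for all t, all Δ ∈ ℝ, all c, u ∈ {0,1}, Q_t(Δ,c;u) = Q̃_t(|Δ|,c;u) and V_t(Δ,c) = Ṽ_t(|Δ|,c). -/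

import Mathlib

open MeasureTheory Real Set

lemma fold_integral (F W : ℝ → ℝ) (hF : Continuous F) (hFpos : ∀ x, 0 < F x) :
    ∫ x : ℝ, F x * W |x| = ∫ x in Set.Ici (0:ℝ), (F x + F (-x)) * W x := by
  have habs : ∀ x : ℝ, F |x| + F (-|x|) = F x + F (-x) := by
    intro x
    rcases abs_cases x with ⟨h, _⟩ | ⟨h, _⟩ <;> rw [h] <;>
      first | rfl | rw [neg_neg, add_comm]
  have hRHS : (∫ x in Set.Ici (0:ℝ), (F x + F (-x)) * W x)
      = (1/2) * ∫ x : ℝ, (F x + F (-x)) * W |x| := by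
    rw [MeasureTheory.integral_Ici_eq_integral_Ioi]
    have := integral_comp_abs (f := fun s => (F s + F (-s)) * W s)
    have heq : (fun x : ℝ => (F |x| + F (-|x|)) * W |x|) = fun x => (F x + F (-x)) * W |x| := by
      funext x; rw [habs]
    rw [heq] at this
    rw [this]; ring
  rw [hRHS]
  by_cases hInt : Integrable (fun x : ℝ => F x * W |x|)
  · have hInt2 : Integrable (fun x : ℝ => F (-x) * W |x|) := by
      have := hInt.comp_neg
      simpa [abs_neg] using this
    have hneg : (∫ x : ℝ, F (-x) * W |x|) = ∫ x : ℝ, F x * W |x| := by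
      have := integral_neg_eq_self (fun x : ℝ => F x * W |x|) volume
      simpa [abs_neg] using this
    have : (∫ x : ℝ, (F x + F (-x)) * W |x|)
        = (∫ x : ℝ, F x * W |x|) + ∫ x : ℝ, F (-x) * W |x| := by
      rw [← integral_add hInt hInt2]
      congr 1; funext x; ring
    rw [this, hneg]; ring
  · rw [integral_undef hInt]
    have hGnot : ¬ Integrable (fun x : ℝ => (F x + F (-x)) * W |x|) := by
      intro hG
      apply hInt
      have hpos : ∀ x : ℝ, (0:ℝ) < F x + F (-x) := fun x => add_pos (hFpos x) (hFpos (-x))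
      have hbd : ∃ C, ∀ x : ℝ, ‖F x / (F x + F (-x))‖ ≤ C := by
        refine ⟨1, fun x => ?_⟩
        rw [Real.norm_eq_abs, abs_div, abs_of_pos (hFpos x),
          abs_of_pos (hpos x)]
        rw [div_le_one (hpos x)]
        nlinarith [hFpos (-x)]
      have hm : AEStronglyMeasurable (fun x : ℝ => F x / (F x + F (-x))) volume := by
        exact (hF.div (hF.add (hF.comp continuous_neg))
          (fun x => ne_of_gt (hpos x))).aestronglyMeasurable
      have := hG.bdd_mul hm (ae_of_all _ hbd.choose_spec)
      have heq : (fun x : ℝ => F x / (F x + F (-x)) * ((F x + F (-x)) * W |x|))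
          = fun x : ℝ => F x * W |x| := by
        funext x
        have hne : F x + F (-x) ≠ 0 := ne_of_gt (hpos x)
        field_simp
      rwa [heq] at this
    rw [integral_undef hGnot]; ring

/-- Equivalence of the original and folded risk-sensitive MDP value iterations:
the folded iterates agree with the original ones via `Δ ↦ |Δ|`. -/
theorem stmt_3 (a σ γ lam : ℝ) (hσ : 0 < σ) (hγ : 0 < γ) (hlam : 0 < lam)
    (p : Fin 2 → Fin 2 → ℝ) (hp : ∀ c c', 0 ≤ p c c') (hp1 : ∀ c, p c 0 + p c 1 = 1)
    (V : ℕ → ℝ → Fin 2 → ℝ) (Q : ℕ → ℝ → Fin 2 → Fin 2 → ℝ)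
    (Vf : ℕ → ℝ → Fin 2 → ℝ) (Qf : ℕ → ℝ → Fin 2 → Fin 2 → ℝ)
    -- original value iteration
    (hV0 : ∀ Δ c, V 0 Δ c = 1)
    (hQ0 : ∀ t Δ c, Q (t + 1) Δ c 0 =
      Real.exp (γ * Δ^2) * ∑ cp : Fin 2, p c cp *
        ∫ dp : ℝ, Real.exp (-(dp - a * Δ)^2 / (2 * σ^2)) * V t dp cp)
    (hQ1 : ∀ t Δ c, Q (t + 1) Δ c 1 =
      (1 - ((c : ℕ) : ℝ)) * Real.exp (γ * (lam + Δ^2)) * ∑ cp : Fin 2, p c cp *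
        (∫ dp : ℝ, Real.exp (-(dp - a * Δ)^2 / (2 * σ^2)) * V t dp cp)
      + ((c : ℕ) : ℝ) * Real.exp (γ * lam) * ∑ cp : Fin 2, p c cp *
        (∫ dp : ℝ, Real.exp (-(dp)^2 / (2 * σ^2)) * V t dp cp))
    (hVsucc : ∀ t Δ c, V (t + 1) Δ c = min (Q (t + 1) Δ c 0) (Q (t + 1) Δ c 1))
    -- folded value iteration on [0,∞)
    (hVf0 : ∀ Δ c, Vf 0 Δ c = 1)
    (hQf0 : ∀ t Δ c, Qf (t + 1) Δ c 0 =
      Real.exp (γ * Δ^2) * ∑ cp : Fin 2, p c cp *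
        ∫ dp in Set.Ici (0 : ℝ),
          (Real.exp (-(dp - a * Δ)^2 / (2 * σ^2)) + Real.exp (-(dp + a * Δ)^2 / (2 * σ^2)))
            * Vf t dp cp)
    (hQf1 : ∀ t Δ c, Qf (t + 1) Δ c 1 =
      (1 - ((c : ℕ) : ℝ)) * Real.exp (γ * (lam + Δ^2)) * ∑ cp : Fin 2, p c cp *
        (∫ dp in Set.Ici (0 : ℝ),
          (Real.exp (-(dp - a * Δ)^2 / (2 * σ^2)) + Real.exp (-(dp + a * Δ)^2 / (2 * σ^2)))
            * Vf t dp cp)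
      + 2 * ((c : ℕ) : ℝ) * Real.exp (γ * lam) * ∑ cp : Fin 2, p c cp *
        (∫ dp in Set.Ici (0 : ℝ), Real.exp (-(dp)^2 / (2 * σ^2)) * Vf t dp cp))
    (hVfsucc : ∀ t Δ c, Vf (t + 1) Δ c = min (Qf (t + 1) Δ c 0) (Qf (t + 1) Δ c 1)) :
    (∀ t (Δ : ℝ) (c u : Fin 2), Q (t + 1) Δ c u = Qf (t + 1) |Δ| c u) ∧
    (∀ t (Δ : ℝ) (c : Fin 2), V t Δ c = Vf t |Δ| c) := by
  have step : ∀ t, (∀ (Δ : ℝ) (c : Fin 2), V t Δ c = Vf t |Δ| c) →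
      ∀ (Δ : ℝ) (c u : Fin 2), Q (t + 1) Δ c u = Qf (t + 1) |Δ| c u := by
    intro t ih Δ c u
    have hI1 : ∀ (cp : Fin 2),
        (∫ dp : ℝ, Real.exp (-(dp - a * Δ)^2 / (2 * σ^2)) * V t dp cp)
          = ∫ dp in Set.Ici (0 : ℝ),
            (Real.exp (-(dp - a * |Δ|)^2 / (2 * σ^2))
              + Real.exp (-(dp + a * |Δ|)^2 / (2 * σ^2))) * Vf t dp cp := by
      intro cp
      have h1 : (∫ dp : ℝ, Real.exp (-(dp - a * Δ)^2 / (2 * σ^2)) * V t dp cp)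
          = ∫ dp : ℝ, Real.exp (-(dp - a * Δ)^2 / (2 * σ^2)) * Vf t |dp| cp := by
        congr 1; funext dp; rw [ih]
      have h2 := fold_integral (fun x => Real.exp (-(x - a * Δ)^2 / (2 * σ^2)))
        (fun s => Vf t s cp) (by fun_prop) (fun x => Real.exp_pos _)
      rw [h1, h2]
      congr 1; funext x
      congr 1
      rcases abs_cases Δ with ⟨h, _⟩ | ⟨h, _⟩ <;> rw [h]
      · congr 2; ring
      · rw [add_comm]; congr 2 <;> ring
    have hI2 : ∀ (cp : Fin 2),
        (∫ dp : ℝ, Real.exp (-(dp)^2 / (2 * σ^2)) * V t dp cp)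
          = 2 * ∫ dp in Set.Ici (0 : ℝ), Real.exp (-(dp)^2 / (2 * σ^2)) * Vf t dp cp := by
      intro cp
      have h1 : (∫ dp : ℝ, Real.exp (-(dp)^2 / (2 * σ^2)) * V t dp cp)
          = ∫ dp : ℝ, Real.exp (-(dp)^2 / (2 * σ^2)) * Vf t |dp| cp := by
        congr 1; funext dp; rw [ih]
      have h2 := fold_integral (fun x => Real.exp (-(x)^2 / (2 * σ^2)))
        (fun s => Vf t s cp) (by fun_prop) (fun x => Real.exp_pos _)
      rw [h1, h2]
      rw [← integral_const_mul]
      congr 1; funext x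
      rw [neg_sq]
      ring
    fin_cases u
    · show Q (t + 1) Δ c 0 = Qf (t + 1) |Δ| c 0
      rw [hQ0, hQf0]
      simp only [hI1, sq_abs]
    · show Q (t + 1) Δ c 1 = Qf (t + 1) |Δ| c 1
      rw [hQ1, hQf1]
      simp only [hI1, hI2, sq_abs, Fin.sum_univ_two]
      ring
  have Vall : ∀ t (Δ : ℝ) (c : Fin 2), V t Δ c = Vf t |Δ| c := by
    intro t
    induction t with
    | zero => intro Δ c; rw [hV0, hVf0]
    | succ n ih =>
      intro Δ c
      rw [hVsucc, hVfsucc, step n ih, step n ih]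
  exact ⟨fun t Δ c u => step t (Vall t) Δ c u, Vall⟩
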